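/- Let K be a field, V a finite-dimensional K-vector space, and N: V → V a nilpotent endomorphism. Then there exists an increasing filtration M = (M_k)_{k∈ℤ} of V with M_k = 0 for k ≪ 0, M_k = V for k ≫ 0, N(M_k) ⊆ M_{k−2} for all k, and such that for every e ≥ 0 the induced map N^e: gr^M_e V → gr^M_{−e} V is an isomorphism. -/

import Mathlib

/-- `M` is a monodromy filtration for the nilpotent operator `N`: an increasing filtration,
eventually `⊥` below and `⊤` above, shifted by `-2` by `N`, and such that for every `e ≥ 0`
the map induced by `N^e` from `gr^M_e = M_e/M_{e-1}` to `gr^M_{-e} = M_{-e}/M_{-e-1}` is an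
isomorphism (expressed elementwise as surjectivity and injectivity on graded pieces). -/
structure IsMonodromyFiltration {K V : Type*} [Field K] [AddCommGroup V] [Module K V]
    (N : Module.End K V) (M : ℤ → Submodule K V) : Prop where
  mono : Monotone M
  eventually_bot : ∃ a : ℤ, ∀ k ≤ a, M k = ⊥
  eventually_top : ∃ b : ℤ, ∀ k : ℤ, b ≤ k → M k = ⊤
  shift : ∀ k : ℤ, ∀ x ∈ M k, N x ∈ M (k - 2)
  graded_surjective : ∀ e : ℕ, ∀ x ∈ M (-(e : ℤ)), ∃ y ∈ M (e : ℤ),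
    x - (N ^ e) y ∈ M (-(e : ℤ) - 1)
  graded_injective : ∀ e : ℕ, ∀ y ∈ M (e : ℤ),
    (N ^ e) y ∈ M (-(e : ℤ) - 1) → y ∈ M ((e : ℤ) - 1)

open Polynomial

namespace MonodromyAux

/-- exponent of the filtration step in the Jordan block of size `e` -/
def tn (e : ℕ) (k : ℤ) : ℕ := (max 0 (min (e : ℤ) (((e : ℤ) - k) / 2))).toNat

variable {K : Type*} [Field K]

/-- the Jordan block of size `e` -/
abbrev Blk (K : Type*) [Field K] (e : ℕ) := K[X] ⧸ Ideal.span {(X : K[X]) ^ e}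

noncomputable def blkmk (e : ℕ) : K[X] →ₗ[K] Blk K e :=
  (Ideal.Quotient.mkₐ K (Ideal.span {(X : K[X]) ^ e})).toLinearMap

@[simp] lemma blkmk_apply (e : ℕ) (q : K[X]) :
    blkmk (K := K) e q = Ideal.Quotient.mk _ q := rfl

/-- multiplication by `X` on the block -/
noncomputable def blkN (e : ℕ) : Module.End K (Blk K e) :=
  LinearMap.mulLeft K (Ideal.Quotient.mk _ X)

lemma blkN_pow (e j : ℕ) (x : Blk K e) :
    (blkN e ^ j) x = Ideal.Quotient.mk _ ((X : K[X]) ^ j) * x := by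
  induction j with
  | zero => simp
  | succ j ih =>
      rw [pow_succ', Module.End.mul_apply, ih, blkN]
      simp only [LinearMap.mulLeft_apply]
      rw [← mul_assoc, ← map_mul, ← pow_succ']

/-- the filtration on the block -/
noncomputable def blkM (e : ℕ) (k : ℤ) : Submodule K (Blk K e) :=
  LinearMap.range ((blkmk e) ∘ₗ LinearMap.mulLeft K ((X : K[X]) ^ tn e k))

lemma mem_blkM {e : ℕ} {k : ℤ} {x : Blk K e} :
    x ∈ blkM (K := K) e k ↔ ∃ q : K[X], Ideal.Quotient.mk _ ((X : K[X]) ^ tn e k * q) = x := by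
  constructor
  · rintro ⟨q, rfl⟩; exact ⟨q, rfl⟩
  · rintro ⟨q, rfl⟩; exact ⟨q, rfl⟩

lemma blkM_eq_of_tn_eq {e : ℕ} {k k' : ℤ} (h : tn e k = tn e k') :
    blkM (K := K) e k = blkM e k' := by
  unfold blkM; rw [h]

lemma blkM_le_of_le {e : ℕ} {k k' : ℤ} (h : tn e k' ≤ tn e k) :
    blkM (K := K) e k ≤ blkM e k' := by
  rintro x hx
  rw [mem_blkM] at hx ⊢
  obtain ⟨q, rfl⟩ := hx
  exact ⟨X ^ (tn e k - tn e k') * q, by rw [← mul_assoc, ← pow_add,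
    Nat.add_sub_cancel' h]⟩

lemma mk_mem_blkM_iff {e t : ℕ} {q : K[X]} :
    Ideal.Quotient.mk (Ideal.span {(X : K[X]) ^ e}) q ∈
      LinearMap.range ((blkmk (K := K) e) ∘ₗ LinearMap.mulLeft K ((X : K[X]) ^ t)) ↔
    (X : K[X]) ^ (min t e) ∣ q := by
  constructor
  · rintro ⟨p, hp⟩
    simp only [LinearMap.coe_comp, Function.comp_apply, LinearMap.mulLeft_apply,
      blkmk_apply] at hp
    rw [Ideal.Quotient.eq, Ideal.mem_span_singleton] at hp
    obtain ⟨r, hr⟩ := hp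
    have : q = X ^ t * p + X ^ e * (-r) := by linear_combination -hr
    rw [this]
    exact dvd_add (Dvd.dvd.mul_right (pow_dvd_pow _ (min_le_left _ _)) _)
      (Dvd.dvd.mul_right (pow_dvd_pow _ (min_le_right _ _)) _)
  · rintro ⟨s, rfl⟩
    rcases le_total t e with h | h
    · rw [min_eq_left h]
      exact ⟨s, rfl⟩
    · rw [min_eq_right h]
      refine ⟨0, ?_⟩
      simp only [LinearMap.coe_comp, Function.comp_apply, LinearMap.mulLeft_apply,
        blkmk_apply, mul_zero, map_zero]
      rw [eq_comm, Ideal.Quotient.eq_zero_iff_mem, Ideal.mem_span_singleton]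
      exact Dvd.dvd.mul_right dvd_rfl s


lemma tn_anti {e : ℕ} {k k' : ℤ} (h : k ≤ k') : tn e k' ≤ tn e k := by unfold tn; omega
lemma tn_of_le_neg {e : ℕ} {k : ℤ} (h : k ≤ -(e : ℤ)) : tn e k = e := by unfold tn; omega
lemma tn_of_ge {e : ℕ} {k : ℤ} (h : (e : ℤ) - 1 ≤ k) : tn e k = 0 := by unfold tn; omega
lemma tn_shift {e : ℕ} (k : ℤ) : tn e (k - 2) ≤ tn e k + 1 := by unfold tn; omega
lemma tn_surj (e a : ℕ) :
    tn e (-(a : ℤ) - 1) = tn e (-(a : ℤ)) ∨ tn e (-(a : ℤ)) = tn e (a : ℤ) + a := by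
  unfold tn; omega
lemma tn_inj (e a : ℕ) :
    tn e ((a : ℤ) - 1) = tn e (a : ℤ) ∨
      (tn e ((a : ℤ) - 1) = tn e (a : ℤ) + 1 ∧
        tn e (-(a : ℤ) - 1) = tn e (a : ℤ) + a + 1 ∧ tn e (a : ℤ) + a + 1 ≤ e) := by
  unfold tn; omega

lemma mem_blkM_iff_dvd {e : ℕ} {k : ℤ} {q : K[X]} :
    Ideal.Quotient.mk (Ideal.span {(X : K[X]) ^ e}) q ∈ blkM (K := K) e k ↔
      (X : K[X]) ^ (min (tn e k) e) ∣ q :=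
  mk_mem_blkM_iff

lemma mem_blkM_of_le {e : ℕ} {k : ℤ} {t : ℕ} (h : tn e k ≤ t) (q : K[X]) :
    Ideal.Quotient.mk (Ideal.span {(X : K[X]) ^ e}) ((X : K[X]) ^ t * q) ∈
      blkM (K := K) e k := by
  rw [mem_blkM]
  exact ⟨X ^ (t - tn e k) * q, by rw [← mul_assoc, ← pow_add, Nat.add_sub_cancel' h]⟩

theorem blk_isMF (e : ℕ) : IsMonodromyFiltration (blkN (K := K) e) (blkM e) where
  mono := fun _ _ h => blkM_le_of_le (tn_anti h)
  eventually_bot := by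
    refine ⟨-(e : ℤ), fun k hk => ?_⟩
    rw [eq_bot_iff]
    rintro x hx
    rw [mem_blkM] at hx
    obtain ⟨q, rfl⟩ := hx
    rw [tn_of_le_neg hk]
    rw [Submodule.mem_bot, Ideal.Quotient.eq_zero_iff_mem, Ideal.mem_span_singleton]
    exact Dvd.dvd.mul_right dvd_rfl q
  eventually_top := by
    refine ⟨(e : ℤ), fun k hk => ?_⟩
    rw [eq_top_iff]
    rintro x -
    obtain ⟨q, rfl⟩ := Ideal.Quotient.mk_surjective x
    rw [mem_blkM, tn_of_ge (by omega)]
    exact ⟨q, by rw [pow_zero, one_mul]⟩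
  shift := by
    intro k x hx
    rw [mem_blkM] at hx
    obtain ⟨q, rfl⟩ := hx
    have : blkN (K := K) e (Ideal.Quotient.mk _ ((X : K[X]) ^ tn e k * q)) =
        Ideal.Quotient.mk _ ((X : K[X]) ^ (tn e k + 1) * q) := by
      rw [blkN, LinearMap.mulLeft_apply, ← map_mul]
      congr 1
      ring
    rw [this]
    exact mem_blkM_of_le (tn_shift k) q
  graded_surjective := by
    intro a x hx
    rcases tn_surj e a with h | h
    · refine ⟨0, Submodule.zero_mem _, ?_⟩
      rw [map_zero, sub_zero, blkM_eq_of_tn_eq h]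
      exact hx
    · rw [mem_blkM] at hx
      obtain ⟨q, rfl⟩ := hx
      refine ⟨Ideal.Quotient.mk _ ((X : K[X]) ^ tn e (a : ℤ) * q), ⟨q, rfl⟩, ?_⟩
      have : (blkN (K := K) e ^ a) (Ideal.Quotient.mk _ ((X : K[X]) ^ tn e (a : ℤ) * q)) =
          Ideal.Quotient.mk _ ((X : K[X]) ^ tn e (-(a : ℤ)) * q) := by
        rw [blkN_pow, ← map_mul]
        congr 1
        rw [← mul_assoc, ← pow_add, h]
        ring_nf
      rw [this, sub_self]
      exact Submodule.zero_mem _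
  graded_injective := by
    intro a y hy hNy
    rcases tn_inj e a with h | ⟨h1, h2, h3⟩
    · rw [blkM_eq_of_tn_eq h]
      exact hy
    · rw [mem_blkM] at hy
      obtain ⟨p, rfl⟩ := hy
      rw [blkN_pow, ← map_mul] at hNy
      rw [mem_blkM_iff_dvd] at hNy
      rw [h2, min_eq_left h3] at hNy
      have hdvd : (X : K[X]) ^ (tn e (a : ℤ) + a) * X ∣
          (X : K[X]) ^ (tn e (a : ℤ) + a) * p := by
        rw [← pow_succ]
        refine hNy.trans (dvd_of_eq ?_)
        rw [← mul_assoc, ← pow_add]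
        ring_nf
      rw [mul_dvd_mul_iff_left (pow_ne_zero _ (X_ne_zero (R := K)))] at hdvd
      obtain ⟨r, rfl⟩ := hdvd
      rw [mem_blkM, h1]
      exact ⟨r, by rw [← mul_assoc, ← pow_succ]⟩

section Pi
variable {ι : Type*} [Fintype ι] {W : ι → Type*}
  [∀ i, AddCommGroup (W i)] [∀ i, Module K (W i)]

noncomputable def piN (Ni : ∀ i, Module.End K (W i)) : Module.End K (∀ i, W i) :=
  LinearMap.pi (fun i => (Ni i) ∘ₗ LinearMap.proj i)

omit [Fintype ι] in
lemma piN_apply (Ni : ∀ i, Module.End K (W i)) (x : ∀ i, W i) (i : ι) :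
    piN Ni x i = Ni i (x i) := rfl

omit [Fintype ι] in
lemma piN_pow (Ni : ∀ i, Module.End K (W i)) (j : ℕ) (x : ∀ i, W i) (i : ι) :
    ((piN Ni) ^ j) x i = ((Ni i) ^ j) (x i) := by
  induction j generalizing x with
  | zero => simp
  | succ j ih =>
      rw [pow_succ, Module.End.mul_apply, ih (piN Ni x), piN_apply, pow_succ,
        Module.End.mul_apply]

theorem pi_isMF (Ni : ∀ i, Module.End K (W i)) (Mi : ∀ i, ℤ → Submodule K (W i))
    (h : ∀ i, IsMonodromyFiltration (Ni i) (Mi i)) :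
    IsMonodromyFiltration (piN Ni) (fun k => Submodule.pi Set.univ (fun i => Mi i k)) where
  mono := fun k k' hk x hx i hi => (h i).mono hk (hx i hi)
  eventually_bot := by
    choose a ha using fun i => (h i).eventually_bot
    obtain ⟨c, hc⟩ := (Set.finite_range a).bddBelow
    refine ⟨c, fun k hk => ?_⟩
    rw [eq_bot_iff]
    intro x hx
    rw [Submodule.mem_bot]
    funext i
    have := Submodule.mem_pi.mp hx i trivial
    rw [ha i k (hk.trans (hc ⟨i, rfl⟩))] at this
    simpa using this
  eventually_top := by
    choose b hb using fun i => (h i).eventually_top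
    obtain ⟨c, hc⟩ := (Set.finite_range b).bddAbove
    refine ⟨c, fun k hk => ?_⟩
    rw [eq_top_iff]
    rintro x - i -
    show x i ∈ Mi i k
    rw [hb i k ((hc ⟨i, rfl⟩).trans hk)]
    trivial
  shift := fun k x hx i _ => (h i).shift k (x i) (hx i trivial)
  graded_surjective := by
    intro a x hx
    choose y hy1 hy2 using fun i => (h i).graded_surjective a (x i) (hx i trivial)
    refine ⟨y, fun i _ => hy1 i, fun i _ => ?_⟩
    have : (x - ((piN Ni) ^ a) y) i = x i - ((Ni i) ^ a) (y i) := by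
      simp [piN_pow]
    rw [this]
    exact hy2 i
  graded_injective := by
    intro a y hy hNy i _
    refine (h i).graded_injective a (y i) (hy i trivial) ?_
    have := hNy i trivial
    rwa [piN_pow] at this

end Pi

section Transport
variable {V W : Type*} [AddCommGroup V] [Module K V] [AddCommGroup W] [Module K W]

lemma equiv_pow_comm (f : V ≃ₗ[K] W) (N : Module.End K V) (N' : Module.End K W)
    (hf : ∀ v, f (N v) = N' (f v)) : ∀ (j : ℕ) (v : V), f ((N ^ j) v) = (N' ^ j) (f v) := by
  intro j
  induction j with
  | zero => simp
  | succ j ih =>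
      intro v
      rw [pow_succ, Module.End.mul_apply, ih, hf, ← Module.End.mul_apply, ← pow_succ]

theorem transport (f : V ≃ₗ[K] W) (N : Module.End K V) (N' : Module.End K W)
    (hf : ∀ v, f (N v) = N' (f v)) {M : ℤ → Submodule K W}
    (hM : IsMonodromyFiltration N' M) :
    IsMonodromyFiltration N (fun k => (M k).comap (f : V →ₗ[K] W)) := by
  have hf_pow := equiv_pow_comm f N N' hf
  constructor
  · exact fun k k' hk => Submodule.comap_mono (hM.mono hk)
  · obtain ⟨a, ha⟩ := hM.eventually_bot
    refine ⟨a, fun k hk => ?_⟩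
    rw [ha k hk]
    rw [eq_bot_iff]
    intro x hx
    simp only [Submodule.mem_comap, LinearEquiv.coe_coe, Submodule.mem_bot] at hx
    simpa using (f.map_eq_zero_iff).mp hx
  · obtain ⟨b, hb⟩ := hM.eventually_top
    exact ⟨b, fun k hk => by rw [hb k hk]; exact Submodule.comap_top _⟩
  · intro k x hx
    simp only [Submodule.mem_comap, LinearEquiv.coe_coe] at hx ⊢
    rw [hf]
    exact hM.shift k (f x) hx
  · intro a x hx
    simp only [Submodule.mem_comap, LinearEquiv.coe_coe] at hx
    obtain ⟨y', hy', hrem⟩ := hM.graded_surjective a (f x) hx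
    refine ⟨f.symm y', ?_, ?_⟩ <;> simp only [Submodule.mem_comap, LinearEquiv.coe_coe]
    · rwa [f.apply_symm_apply]
    · rw [map_sub, hf_pow, f.apply_symm_apply]
      exact hrem
  · intro a y hy hNy
    simp only [Submodule.mem_comap, LinearEquiv.coe_coe] at hy hNy ⊢
    rw [hf_pow] at hNy
    exact hM.graded_injective a (f y) hy hNy

end Transport
end MonodromyAux

open MonodromyAux Polynomial in
theorem monodromyFiltration_exists_aux {K : Type u} [Field K] {V : Type (max u v)}
    [AddCommGroup V] [Module K V] [FiniteDimensional K V] (N : Module.End K V)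
    (hN : IsNilpotent N) : ∃ M : ℤ → Submodule K V, IsMonodromyFiltration N M := by
  obtain ⟨n, hn⟩ := hN
  have hall : ∀ m : Module.AEval' N, ((X : K[X]) ^ n) • m = 0 := by
    intro m
    apply (Module.AEval'.of N).symm.injective
    rw [Module.AEval.of_symm_smul, map_zero]
    rw [map_pow, aeval_X]
    exact congrFun (congrArg _ hn) _
  have htor : Module.IsTorsion K[X] (Module.AEval' N) := fun m =>
    ⟨⟨(X : K[X]) ^ n, mem_nonZeroDivisors_of_ne_zero (pow_ne_zero _ X_ne_zero)⟩, hall m⟩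
  obtain ⟨ι, hfin, p, hp, e, ⟨ψ⟩⟩ := Module.equiv_directSum_of_isTorsion.{u, max u v} htor
  haveI := hfin
  haveI := Classical.decEq ι
  have smul_quot : ∀ (I : Ideal K[X]) (r q : K[X]),
      r • (Ideal.Quotient.mk I q) = Ideal.Quotient.mk I (r * q) := by
    intro I r q
    rw [← Ideal.Quotient.mk_eq_mk, ← Ideal.Quotient.mk_eq_mk, ← Submodule.Quotient.mk_smul,
      smul_eq_mul]
  have hspan : ∀ i, (Submodule.span K[X] {p i ^ e i} : Ideal K[X]) =
      Ideal.span {(X : K[X]) ^ e i} := by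
    intro i
    have hann : (X : K[X]) ^ n ∈ Submodule.span K[X] {p i ^ e i} := by
      have h0 := hall (ψ.symm (DirectSum.lof K[X] ι _ i (Submodule.Quotient.mk 1)))
      have h1 := congrArg ψ h0
      rw [map_smul, ψ.apply_symm_apply, map_zero, ← map_smul] at h1
      have h2 := congrArg (fun z => z i) h1
      simp only [DirectSum.lof_apply, DirectSum.zero_apply] at h2
      rw [← Submodule.Quotient.mk_smul, smul_eq_mul, mul_one,
        Submodule.Quotient.mk_eq_zero] at h2
      exact h2
    rcases Nat.eq_zero_or_pos (e i) with h0 | hpos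
    · rw [h0, pow_zero, pow_zero]
    · have hdvd : p i ^ e i ∣ (X : K[X]) ^ n := Ideal.mem_span_singleton.mp hann
      have hpdvd : p i ∣ (X : K[X]) ^ n :=
        dvd_trans (dvd_pow_self _ hpos.ne') hdvd
      have hprime : Prime (p i) := (hp i).prime
      have hpX : p i ∣ (X : K[X]) := hprime.dvd_of_dvd_pow hpdvd
      have hassoc : Associated (p i) (X : K[X]) :=
        (hp i).associated_of_dvd Polynomial.irreducible_X hpX
      exact Ideal.span_singleton_eq_span_singleton.mpr hassoc.pow_pow
  let ψ₃ : Module.AEval' N ≃ₗ[K[X]] ∀ i, Blk K (e i) :=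
    ψ.trans ((DirectSum.linearEquivFunOnFintype K[X] ι _).trans
      (LinearEquiv.piCongrRight fun i => Submodule.quotEquivOfEq _ _ (hspan i)))
  let f : V ≃ₗ[K] ∀ i, Blk K (e i) :=
    (Module.AEval'.of N).trans (ψ₃.restrictScalars K)
  have hf : ∀ v : V, f (N v) = piN (K := K) (fun i => blkN (e i)) (f v) := by
    intro v
    have h1 : f (N v) = (X : K[X]) • (ψ₃ (Module.AEval'.of N v)) := by
      show ψ₃ (Module.AEval'.of N (N v)) = _
      rw [← Module.AEval'.X_smul_of, map_smul]
    rw [h1]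
    show _ = piN (K := K) (fun i => blkN (e i)) (ψ₃ (Module.AEval'.of N v))
    funext i
    rw [Pi.smul_apply, piN_apply]
    obtain ⟨q, hq⟩ := Ideal.Quotient.mk_surjective (ψ₃ (Module.AEval'.of N v) i)
    rw [← hq, smul_quot, blkN, LinearMap.mulLeft_apply, ← map_mul]
  exact ⟨_, transport f N _ hf
    (pi_isMF (fun i => blkN (e i)) (fun i => blkM (e i)) (fun i => blk_isMF (e i)))⟩

theorem monodromyFiltration_exists' {K : Type u} {V : Type v} [Field K] [AddCommGroup V]
    [Module K V] [FiniteDimensional K V] (N : Module.End K V) (hN : IsNilpotent N) :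
    ∃ M : ℤ → Submodule K V, IsMonodromyFiltration N M := by
  let g : V ≃ₗ[K] ULift.{u} V := ULift.moduleEquiv.symm
  haveI : Module.Finite K (ULift.{u} V) := Module.Finite.equiv g
  let N' : Module.End K (ULift.{u} V) :=
    (g : V →ₗ[K] ULift.{u} V) ∘ₗ N ∘ₗ (g.symm : ULift.{u} V →ₗ[K] V)
  have hcomm : ∀ v : V, g (N v) = N' (g v) := by
    intro v
    show g (N v) = g (N (g.symm (g v)))
    rw [g.symm_apply_apply]
  have hN' : IsNilpotent N' := by
    obtain ⟨n, hn⟩ := hN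
    refine ⟨n, ?_⟩
    ext x
    have := MonodromyAux.equiv_pow_comm g N N' hcomm n (g.symm x)
    rw [hn] at this
    simp only [LinearMap.zero_apply, map_zero] at this
    rw [g.apply_symm_apply] at this
    exact congrArg ULift.down this.symm
  obtain ⟨M, hM⟩ := monodromyFiltration_exists_aux.{u, v} N' hN'
  exact ⟨_, MonodromyAux.transport g N N' hcomm hM⟩


/-- Existence of the monodromy filtration of a nilpotent endomorphism of a
finite-dimensional vector space. -/
theorem monodromyFiltration_exists {K V : Type*} [Field K] [AddCommGroup V] [Module K V]
    [FiniteDimensional K V] (N : Module.End K V) (hN : IsNilpotent N) :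
    ∃ M : ℤ → Submodule K V, IsMonodromyFiltration N M := monodromyFiltration_exists' N hN
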